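/- Let m, n ≥ 0 be integers with p = 2m+n ≥ 1, and let G' be a finite labeled simple graph with v vertices and e edges such that every (m,n)-colored mixed graph with underlying graph G' admits a homomorphism to some (m,n)-colored mixed graph on at most k vertices. Then p^{k(k-1)/2} · k^{v} ≥ p^{e}. -/

import Mathlib

/-- The possible kinds of links from a vertex `u` to a vertex `v` in an
`(m,n)`-colored mixed graph: an arc `u → v` of one of `m` colors, an arc
`v → u` of one of `m` colors, or an (unoriented) edge of one of `n` colors. -/
inductive Link (m n : ℕ) : Type where
  | arcOut : Fin m → Link m n
  | arcIn : Fin m → Link m n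
  | edge : Fin n → Link m n

/-- The link as seen from the other endpoint. -/
def Link.flip {m n : ℕ} : Link m n → Link m n
  | .arcOut c => .arcIn c
  | .arcIn c => .arcOut c
  | .edge c => .edge c

/-- An `(m,n)`-colored mixed graph on vertex type `V`: between any two distinct
vertices there is at most one link (a colored arc in either direction or a
colored edge), and there are no loops. -/
structure CMGraph (m n : ℕ) (V : Type) where
  link : V → V → Option (Link m n)
  symm : ∀ u v, link v u = (link u v).map Link.flip
  loopless : ∀ v, link v v = none

/-- The underlying simple graph of an `(m,n)`-colored mixed graph. -/
def CMGraph.underlying {m n : ℕ} {V : Type} (G : CMGraph m n V) : SimpleGraph V where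
  Adj u v := (G.link u v).isSome
  symm := by
    refine ⟨?_⟩
    intro u v h
    rw [G.symm u v]
    rcases hx : G.link u v with _ | l
    · rw [hx] at h; simp at h
    · simp
  loopless := by
    refine ⟨?_⟩
    intro v h
    rw [G.loopless v] at h
    simp at h

/-- A homomorphism of `(m,n)`-colored mixed graphs: arcs map to arcs of the same
color and direction, edges map to edges of the same color. -/
def IsCMHom {m n : ℕ} {V W : Type} (G : CMGraph m n V) (H : CMGraph m n W)
    (f : V → W) : Prop :=
  ∀ u v l, G.link u v = some l → H.link (f u) (f v) = some l

/-- `G` admits a homomorphism to some `(m,n)`-colored mixed graph on at most `k`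
vertices, i.e. `χ_{(m,n)}(G) ≤ k`. -/
def CMChromAtMost {m n : ℕ} {V : Type} (G : CMGraph m n V) (k : ℕ) : Prop :=
  ∃ (W : Type) (inst : Fintype W) (H : CMGraph m n W) (f : V → W),
    @Fintype.card W inst ≤ k ∧ IsCMHom G H f

/-- Every `(m,n)`-colored mixed graph admitting a homomorphism from `G` has at
least `k` vertices, i.e. `χ_{(m,n)}(G) ≥ k`. -/
def CMChromAtLeast {m n : ℕ} {V : Type} (G : CMGraph m n V) (k : ℕ) : Prop :=
  ∀ (W : Type) (inst : Fintype W) (H : CMGraph m n W) (f : V → W),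
    IsCMHom G H f → k ≤ @Fintype.card W inst

/-- The acyclic chromatic number of `G` is at most `k`: there is a proper
`k`-coloring in which the union of any two color classes induces a forest. -/
def AcycChromAtMost {V : Type} (G : SimpleGraph V) (k : ℕ) : Prop :=
  ∃ c : V → Fin k, (∀ u v, G.Adj u v → c u ≠ c v) ∧
    ∀ i j : Fin k, (G.induce {v | c v = i ∨ c v = j}).IsAcyclic

/-- The edge set of `G` can be decomposed into `r` forests. -/
def ArbAtMost {V : Type} (G : SimpleGraph V) (r : ℕ) : Prop :=
  ∃ F : Fin r → SimpleGraph V,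
    (∀ i, F i ≤ G) ∧
    (∀ i, (F i).IsAcyclic) ∧
    (∀ u v, G.Adj u v → ∃ i, (F i).Adj u v) ∧
    (∀ i j, i ≠ j → ∀ u v, ¬ ((F i).Adj u v ∧ (F j).Adj u v))

/-- Every vertex of `G` has degree at most `d`. -/
def MaxDegAtMost {V : Type} (G : SimpleGraph V) (d : ℕ) : Prop :=
  ∀ v, (G.neighborSet v).ncard ≤ d

/-- `G` is `d`-degenerate: every nonempty (induced) subgraph has a vertex of
degree at most `d` in it. -/
def DegenAtMost {V : Type} (G : SimpleGraph V) (d : ℕ) : Prop :=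
  ∀ s : Set V, s.Nonempty → ∃ v ∈ s, (G.neighborSet v ∩ s).ncard ≤ d


attribute [local instance] Classical.propDecidable

@[simp] lemma Link.flip_flip {m n : ℕ} (l : Link m n) : l.flip.flip = l := by
  cases l <;> rfl

def linkEquiv (m n : ℕ) : Link m n ≃ (Fin m ⊕ Fin m ⊕ Fin n) where
  toFun l := match l with
    | .arcOut c => Sum.inl c
    | .arcIn c => Sum.inr (Sum.inl c)
    | .edge c => Sum.inr (Sum.inr c)
  invFun s := match s with
    | Sum.inl c => .arcOut c
    | Sum.inr (Sum.inl c) => .arcIn c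
    | Sum.inr (Sum.inr c) => .edge c
  left_inv l := by cases l <;> rfl
  right_inv s := by rcases s with c | c | c <;> rfl

noncomputable instance {m n : ℕ} : Fintype (Link m n) :=
  Fintype.ofEquiv _ (linkEquiv m n).symm

lemma card_link (m n : ℕ) : Fintype.card (Link m n) = 2 * m + n := by
  rw [Fintype.card_congr (linkEquiv m n)]
  simp [two_mul, add_assoc]

/-- Build a colored mixed graph from a simple graph and an assignment of links
to its edges (each link read from the smaller endpoint to the larger one). -/
noncomputable def buildCM {m n : ℕ} {V : Type} [Fintype V] (G : SimpleGraph V)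
    (c : ↥G.edgeSet → Link m n) : CMGraph m n V where
  link u v := if h : G.Adj u v then
      some (if Fintype.equivFin V u < Fintype.equivFin V v
        then c ⟨s(u,v), h⟩ else (c ⟨s(u,v), h⟩).flip)
    else none
  symm := by
    intro u v
    by_cases h : G.Adj u v
    · rw [dif_pos h, dif_pos h.symm]
      have hne : Fintype.equivFin V u ≠ Fintype.equivFin V v :=
        fun he => h.ne ((Fintype.equivFin V).injective he)
      have hsw : s(v,u) = s(u,v) := Sym2.eq_swap
      rcases hne.lt_or_gt with h1 | h1
      · rw [if_pos h1, if_neg (asymm h1)]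
        simp only [Option.map_some]
        congr 1
        congr 1 <;> simp [hsw]
      · rw [if_neg (asymm h1), if_pos h1]
        simp only [Option.map_some, Link.flip_flip]
        congr 1
        congr 1 <;> simp [hsw]
    · rw [dif_neg h, dif_neg (fun h' => h h'.symm)]
      rfl
  loopless := by
    intro v
    rw [dif_neg (G.loopless.irrefl v)]

lemma buildCM_underlying {m n : ℕ} {V : Type} [Fintype V] (G : SimpleGraph V)
    (c : ↥G.edgeSet → Link m n) : (buildCM G c).underlying = G := by
  ext u v
  simp only [CMGraph.underlying, buildCM]
  by_cases h : G.Adj u v <;> simp [h]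

/-- Transport a colored mixed graph along an embedding of vertex types. -/
noncomputable def mapCM {m n : ℕ} {W W' : Type} (H : CMGraph m n W) (emb : W ↪ W') :
    CMGraph m n W' where
  link i j := if hi : ∃ w, emb w = i then if hj : ∃ w, emb w = j then
      H.link hi.choose hj.choose else none else none
  symm := by
    intro i j
    by_cases hi : ∃ w, emb w = i <;> by_cases hj : ∃ w, emb w = j
    · rw [dif_pos hj, dif_pos hi, dif_pos hi, dif_pos hj]; exact H.symm _ _
    · rw [dif_neg hj, dif_pos hi, dif_neg hj]; rfl
    · rw [dif_pos hj, dif_neg hi, dif_neg hi]; rfl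
    · rw [dif_neg hj, dif_neg hi]; rfl
  loopless := by
    intro i
    by_cases hi : ∃ w, emb w = i
    · rw [dif_pos hi, dif_pos hi, H.loopless]
    · rw [dif_neg hi]

lemma mapCM_hom {m n : ℕ} {W W' : Type} (H : CMGraph m n W) (emb : W ↪ W') :
    IsCMHom H (mapCM H emb) emb := by
  intro u v l hl
  have hi : ∃ w, emb w = emb u := ⟨u, rfl⟩
  have hj : ∃ w, emb w = emb v := ⟨v, rfl⟩
  have hiu : hi.choose = u := emb.injective hi.choose_spec
  have hjv : hj.choose = v := emb.injective hj.choose_spec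
  simp only [mapCM, dif_pos hi, dif_pos hj, hiu, hjv]
  exact hl

/-- If `G'` has `v` vertices and `e` edges and every `(m,n)`-colored
mixed graph with underlying graph `G'` admits a homomorphism to some `(m,n)`-colored
mixed graph on at most `k` vertices, then `p^(k(k-1)/2) · k^v ≥ p^e` with `p = 2m+n`. -/
theorem counting_inequality_of_mixed_chromatic (m n k : ℕ) (hp : 1 ≤ 2 * m + n)
    (V : Type) [Fintype V] (G : SimpleGraph V)
    (h : ∀ M : CMGraph m n V, M.underlying = G → CMChromAtMost M k) :
    (2 * m + n) ^ (k * (k - 1) / 2) * k ^ (Fintype.card V) ≥ (2 * m + n) ^ G.edgeSet.ncard := by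
  classical
  obtain ⟨l0⟩ : Nonempty (Link m n) := by
    rw [← Fintype.card_pos_iff, card_link]; exact hp
  haveI : Fintype ↥G.edgeSet := Fintype.ofFinite _
  have key : ∀ c : ↥G.edgeSet → Link m n,
      ∃ (F : V → Fin k) (A : Sym2 (Fin k) → Link m n),
        ∀ u v, G.Adj u v → F u ≠ F v ∧
          (buildCM G c).link u v
            = some (if F u < F v then A s(F u, F v) else (A s(F u, F v)).flip) := by
    intro c
    obtain ⟨W, instW, H, f, hcard, hhom⟩ := h (buildCM G c) (buildCM_underlying G c)
    obtain ⟨emb⟩ : Nonempty (W ↪ Fin k) :=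
      Function.Embedding.nonempty_of_card_le (by simpa using hcard)
    set H' := mapCM H emb with hH'def
    have hhom' : IsCMHom H H' emb := mapCM_hom H emb
    refine ⟨emb ∘ f, Sym2.lift ⟨fun i j => if i ≤ j then (H'.link i j).getD l0
      else (H'.link j i).getD l0, ?_⟩, ?_⟩
    · intro i j
      dsimp only
      rcases lt_trichotomy i j with h1 | h1 | h1
      · rw [if_pos h1.le, if_neg (not_le.2 h1)]
      · subst h1; rfl
      · rw [if_neg (not_le.2 h1), if_pos h1.le]
    · intro u v hadj
      obtain ⟨l, hl⟩ : ∃ l, (buildCM G c).link u v = some l :=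
        ⟨_, dif_pos hadj⟩
      have hH : H'.link (emb (f u)) (emb (f v)) = some l := hhom' _ _ _ (hhom u v l hl)
      have hne2 : (emb ∘ f) u ≠ (emb ∘ f) v := by
        intro he
        simp only [Function.comp_apply] at he
        rw [he, H'.loopless] at hH
        cases hH
      refine ⟨hne2, ?_⟩
      rw [hl]
      simp only [Function.comp_apply] at hne2 ⊢
      rcases hne2.lt_or_gt with h1 | h1
      · rw [if_pos h1]
        simp only [Sym2.lift_mk]
        rw [if_pos h1.le, hH]
        rfl
      · rw [if_neg (asymm h1)]
        have hH2 : H'.link (emb (f v)) (emb (f u)) = some l.flip := by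
          rw [H'.symm, hH]; rfl
        simp only [Sym2.lift_mk]
        rw [if_neg (not_le.2 h1), hH2]
        simp
  choose F A hFA using key
  have hinj : Function.Injective
      (fun c : ↥G.edgeSet → Link m n =>
        ((F c, fun s : {s : Sym2 (Fin k) // ¬ s.IsDiag} => A c s.val) :
          (V → Fin k) × ({s : Sym2 (Fin k) // ¬ s.IsDiag} → Link m n))) := by
    intro c1 c2 hc
    simp only [Prod.mk.injEq] at hc
    obtain ⟨hcF, hcA⟩ := hc
    funext s
    obtain ⟨s, hs⟩ := s
    induction s using Sym2.ind with
    | _ u v =>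
    have hadj : G.Adj u v := G.mem_edgeSet.1 hs
    obtain ⟨hne1, heq1⟩ := hFA c1 u v hadj
    obtain ⟨hne2, heq2⟩ := hFA c2 u v hadj
    rw [hcF] at heq1 hne1
    have hAeq : A c1 s(F c2 u, F c2 v) = A c2 s(F c2 u, F c2 v) := by
      have hnd : ¬ (s(F c2 u, F c2 v) : Sym2 (Fin k)).IsDiag := by
        rw [Sym2.mk_isDiag_iff]; exact hne2
      exact congrFun hcA ⟨_, hnd⟩
    rw [hAeq] at heq1
    have hlink : (buildCM G c1).link u v = (buildCM G c2).link u v :=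
      heq1.trans heq2.symm
    have hlink2 : (if Fintype.equivFin V u < Fintype.equivFin V v
          then c1 ⟨s(u,v), hadj⟩ else (c1 ⟨s(u,v), hadj⟩).flip)
        = (if Fintype.equivFin V u < Fintype.equivFin V v
          then c2 ⟨s(u,v), hadj⟩ else (c2 ⟨s(u,v), hadj⟩).flip) := by
      have h1 : (buildCM G c1).link u v = some _ := dif_pos hadj
      have h2 : (buildCM G c2).link u v = some _ := dif_pos hadj
      rw [h1, h2] at hlink
      exact Option.some.inj hlink
    by_cases ho : Fintype.equivFin V u < Fintype.equivFin V v
    · rw [if_pos ho, if_pos ho] at hlink2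
      exact hlink2
    · rw [if_neg ho, if_neg ho] at hlink2
      have := congrArg Link.flip hlink2
      simpa using this
  have hcount : G.edgeSet.ncard = Fintype.card ↥G.edgeSet := by
    rw [← Nat.card_coe_set_eq, Nat.card_eq_fintype_card]
  calc (2 * m + n) ^ G.edgeSet.ncard
      = Fintype.card (↥G.edgeSet → Link m n) := by
        rw [Fintype.card_fun, card_link, hcount]
    _ ≤ Fintype.card ((V → Fin k) × ({s : Sym2 (Fin k) // ¬ s.IsDiag} → Link m n)) :=
        Fintype.card_le_of_injective _ hinj
    _ = (2 * m + n) ^ (k * (k - 1) / 2) * k ^ (Fintype.card V) := by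
        rw [Fintype.card_prod, Fintype.card_fun, Fintype.card_fun, card_link,
          Sym2.card_subtype_not_diag, Fintype.card_fin, Nat.choose_two_right]
        ring
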